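/- With A₁ = A₂ = B₁ = 1, B₂ = -1 and eigenfunctions φⱼ = Aⱼ e^{-iX/(2λⱼ) - iλⱼT}, ψⱼ = Bⱼ e^{iX/(2λⱼ) + iλⱼT}, the one-fold Darboux formula q⁽¹⁾ = 2iφ₁φ₂(λ₁-λ₂)/(ψ₂φ₁ - ψ₁φ₂) simplifies to the closed form q⁽¹⁾ = -i(λ₁-λ₂)·e^{-i(λ₁+λ₂)X/(2λ₁λ₂) - i(λ₁+λ₂)T}·sech( i(λ₁-λ₂)X/(2λ₁λ₂) - i(λ₁-λ₂)T ). -/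

import Mathlib

open Complex

noncomputable def csech (z : ℂ) : ℂ := 2 / (Complex.exp z + Complex.exp (-z))

theorem one_soliton_closed_form (lam₁ lam₂ : ℂ) (h1 : lam₁ ≠ 0) (h2 : lam₂ ≠ 0)
    (hne : lam₁ ≠ lam₂) (X T : ℝ)
    (φ₁ ψ₁ φ₂ ψ₂ : ℂ)
    (hφ₁ : φ₁ = Complex.exp (-(I * X) / (2 * lam₁) - I * lam₁ * T))
    (hψ₁ : ψ₁ = Complex.exp ((I * X) / (2 * lam₁) + I * lam₁ * T))
    (hφ₂ : φ₂ = Complex.exp (-(I * X) / (2 * lam₂) - I * lam₂ * T))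
    (hψ₂ : ψ₂ = -Complex.exp ((I * X) / (2 * lam₂) + I * lam₂ * T))
    (hden : ψ₂ * φ₁ - ψ₁ * φ₂ ≠ 0)
    (hsech : Complex.exp (I * (lam₁ - lam₂) * X / (2 * lam₁ * lam₂) - I * (lam₁ - lam₂) * T)
      + Complex.exp (-(I * (lam₁ - lam₂) * X / (2 * lam₁ * lam₂) - I * (lam₁ - lam₂) * T)) ≠ 0) :
    2 * I * φ₁ * φ₂ * (lam₁ - lam₂) / (ψ₂ * φ₁ - ψ₁ * φ₂)
      = -I * (lam₁ - lam₂)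
        * Complex.exp (-(I * (lam₁ + lam₂) * X) / (2 * lam₁ * lam₂) - I * (lam₁ + lam₂) * T)
        * csech (I * (lam₁ - lam₂) * X / (2 * lam₁ * lam₂) - I * (lam₁ - lam₂) * T) := by
  set a : ℂ := I * (lam₁ - lam₂) * X / (2 * lam₁ * lam₂) - I * (lam₁ - lam₂) * T with ha
  set b : ℂ := -(I * (lam₁ + lam₂) * X) / (2 * lam₁ * lam₂) - I * (lam₁ + lam₂) * T with hb
  have hA : ψ₂ * φ₁ = -Complex.exp a := by
    rw [hψ₂, hφ₁, neg_mul, ← Complex.exp_add, neg_inj]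
    congr 1
    rw [ha]
    field_simp
    ring
  have hB : ψ₁ * φ₂ = Complex.exp (-a) := by
    rw [hψ₁, hφ₂, ← Complex.exp_add]
    congr 1
    rw [ha]
    field_simp
    ring
  have hC : φ₁ * φ₂ = Complex.exp b := by
    rw [hφ₁, hφ₂, ← Complex.exp_add]
    congr 1
    rw [hb]
    field_simp
    ring
  have hden' : ψ₂ * φ₁ - ψ₁ * φ₂ = -(Complex.exp a + Complex.exp (-a)) := by
    rw [hA, hB]; ring
  rw [csech, hden']
  have h2 : 2 * I * φ₁ * φ₂ * (lam₁ - lam₂) = 2 * I * (lam₁ - lam₂) * Complex.exp b := by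
    rw [← hC]; ring
  rw [h2]
  rw [div_eq_iff (neg_ne_zero.mpr hsech)]
  field_simp
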